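/- Let Ω ⊆ ℂⁿ be a bounded convex d-balanced domain, z ∈ Ω, w ∈ ℂⁿ, and k ≥ h_{d,Ω}(−w). Then the point ((z₁ − w₁)/(2(1+k)^{d₁}), …, (zₙ − wₙ)/(2(1+k)^{dₙ})) lies in Ω. -/

import Mathlib

open Bornology

/-- The Minkowski function of a set `Ω` in a complex vector space. -/
noncomputable def mink {E : Type*} [SMul ℂ E] (Ω : Set E) (z : E) : ℝ :=
  sInf {t : ℝ | 0 < t ∧ (t : ℂ)⁻¹ • z ∈ Ω}

/-- `Ω` is balanced: `λ • z ∈ Ω` whenever `z ∈ Ω` and `‖λ‖ ≤ 1`. -/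
def Bal {E : Type*} [SMul ℂ E] (Ω : Set E) : Prop :=
  ∀ z ∈ Ω, ∀ l : ℂ, ‖l‖ ≤ 1 → l • z ∈ Ω

/-- The sublevel set `Ω(r) = {z : h_Ω(z) < r}`. -/
def sub' {E : Type*} [SMul ℂ E] (Ω : Set E) (r : ℝ) : Set E := {z | mink Ω z < r}
/-- `Ω` is `d`-balanced. -/
def dBal {ι : Type*} (d : ι → ℕ) (Ω : Set (ι → ℂ)) : Prop :=
  ∀ z ∈ Ω, ∀ l : ℂ, ‖l‖ ≤ 1 → (fun i => l ^ (d i) * z i) ∈ Ω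

/-- The `d`-Minkowski function of `Ω`. -/
noncomputable def dMink {ι : Type*} (d : ι → ℕ) (Ω : Set (ι → ℂ)) (z : ι → ℂ) : ℝ :=
  sInf {t : ℝ | 0 < t ∧ (fun i => z i / (t : ℂ) ^ (d i)) ∈ Ω}

/-- The sublevel set `Ω^d(r) = {z : h_{d,Ω}(z) < r}`. -/
def dSub {ι : Type*} (d : ι → ℕ) (Ω : Set (ι → ℂ)) (r : ℝ) : Set (ι → ℂ) :=
  {z | dMink d Ω z < r}

/-- If `z ∈ Ω` and `k ≥ h_{d,Ω}(-w)`, then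
`((z₁-w₁)/(2(1+k)^{d₁}), …, (zₙ-wₙ)/(2(1+k)^{dₙ})) ∈ Ω`. -/
theorem stmt18 {n : ℕ} (d : Fin n → ℕ) (hd : ∀ i, 1 ≤ d i) (Ω : Set (Fin n → ℂ))
    (hO : IsOpen Ω) (hconn : IsConnected Ω) (hbd : IsBounded Ω)
    (hcv : Convex ℝ Ω) (hbal : dBal d Ω)
    (z w : Fin n → ℂ) (hz : z ∈ Ω) (k : ℝ) (hk : dMink d Ω (-w) ≤ k) :
    (fun i => (z i - w i) / (2 * ((1 + k : ℝ) : ℂ) ^ (d i))) ∈ Ω := by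
  -- k nonneg
  have hknn : 0 ≤ k := le_trans (Real.sInf_nonneg (fun x hx => hx.1.le)) hk
  have h1k : (0:ℝ) < 1 + k := by linarith
  have h1kC : ((1 + k : ℝ) : ℂ) ≠ 0 := by exact_mod_cast h1k.ne'
  have h1kC' : (1 + (k:ℂ)) ≠ 0 := by push_cast at h1kC; exact h1kC
  -- 0 ∈ Ω
  have h0 : (0 : Fin n → ℂ) ∈ Ω := by
    have := hbal z hz 0 (by simp)
    convert this using 1
    funext i
    simp [zero_pow (Nat.one_le_iff_ne_zero.mp (hd i))]
  -- the set S is nonempty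
  set S := {t : ℝ | 0 < t ∧ (fun i => (-w) i / (t : ℂ) ^ (d i)) ∈ Ω} with hS
  obtain ⟨ε, hε, hball⟩ := Metric.isOpen_iff.mp hO 0 h0
  have hSne : S.Nonempty := by
    set t : ℝ := max 1 (‖w‖ / ε + 1) with ht
    have ht1 : (1:ℝ) ≤ t := le_max_left _ _
    have htpos : 0 < t := by linarith
    refine ⟨t, htpos, hball ?_⟩
    rw [Metric.mem_ball, dist_zero_right]
    have hlt : ∀ i, ‖(-w) i / (t:ℂ) ^ (d i)‖ < ε := by
      intro i
      have hwt : ‖w‖ / ε + 1 ≤ t := le_max_right _ _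
      have hwi : ‖w i‖ ≤ ‖w‖ := norm_le_pi_norm w i
      have htd : t ≤ t ^ (d i) := by
        calc t = t ^ 1 := (pow_one t).symm
        _ ≤ t ^ (d i) := pow_le_pow_right₀ ht1 (hd i)
      have : ‖(-w) i / (t:ℂ) ^ (d i)‖ = ‖w i‖ / t ^ (d i) := by
        rw [norm_div, norm_pow]
        simp [Complex.norm_real, abs_of_pos htpos]
      rw [this]
      have h2 : ‖w i‖ / t ^ (d i) ≤ ‖w‖ / t :=
        div_le_div₀ (norm_nonneg _) hwi htpos htd
      have h3 : ‖w‖ / t < ε := by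
        rw [div_lt_iff₀ htpos]
        have : ‖w‖ / ε < t := by linarith
        calc ‖w‖ = (‖w‖ / ε) * ε := by field_simp
        _ < t * ε := mul_lt_mul_of_pos_right this hε
        _ = ε * t := mul_comm _ _
      linarith
    -- pi norm < ε
    rcases Nat.eq_zero_or_pos n with hn | hn
    · subst hn
      have e : ∀ f : Fin 0 → ℂ, ‖f‖ = 0 := fun f => by rw [Subsingleton.elim f 0, norm_zero]
      rw [e]; exact hε
    · have : Nonempty (Fin n) := ⟨⟨0, hn⟩⟩
      exact pi_norm_lt_iff hε |>.mpr hlt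
  -- get t ∈ S with t < 1 + k
  have hinf : sInf S < 1 + k := lt_of_le_of_lt hk (by linarith)
  obtain ⟨t, ⟨htpos, htw⟩, htlt⟩ := exists_lt_of_csInf_lt hSne hinf
  have htC : (t:ℂ) ≠ 0 := by exact_mod_cast htpos.ne'
  -- -w / (1+k)^d ∈ Ω
  have hb : (fun i => -w i / ((1 + k : ℝ):ℂ) ^ (d i)) ∈ Ω := by
    have hl : ‖((t:ℝ):ℂ) / ((1+k:ℝ):ℂ)‖ ≤ 1 := by
      rw [norm_div]
      simp only [Complex.norm_real, Real.norm_eq_abs]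
      rw [abs_of_pos htpos, abs_of_pos h1k, div_le_one h1k]
      linarith
    have := hbal _ htw _ hl
    convert this using 1
    funext i
    simp only [Pi.neg_apply]
    rw [div_pow]
    field_simp
  -- z / (1+k)^d ∈ Ω
  have ha : (fun i => z i / ((1 + k : ℝ):ℂ) ^ (d i)) ∈ Ω := by
    have hl : ‖(1 : ℂ) / ((1+k:ℝ):ℂ)‖ ≤ 1 := by
      rw [norm_div, norm_one]
      simp only [Complex.norm_real, Real.norm_eq_abs]
      rw [abs_of_pos h1k, div_le_one h1k]
      linarith
    have := hbal _ hz _ hl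
    convert this using 1
    funext i
    rw [div_pow, one_pow]
    field_simp
  -- convex combination
  have := hcv ha hb (by norm_num : (0:ℝ) ≤ 1/2) (by norm_num : (0:ℝ) ≤ 1/2) (by norm_num)
  convert this using 1
  funext i
  simp only [Pi.add_apply, Pi.smul_apply]
  rw [Complex.real_smul, Complex.real_smul]
  push_cast
  field_simp
  ring
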